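/- Let m ≥ 1. For X ∈ ℍ^m and purely imaginary Z ∈ ℍ, let M(X,Z) be the (m+2)×(m+2) quaternion matrix in block form M(X,Z) = [[1 + ‖X‖²/8 + Z/2, −X*/2, ‖X‖²/8 + Z/2], [−X/2, I_m, −X/2], [−‖X‖²/8 − Z/2, X*/2, 1 − ‖X‖²/8 − Z/2]]. Then for all X₁, X₂ ∈ ℍ^m and purely imaginary Z₁, Z₂ ∈ ℍ: M(X₁,Z₁) · M(X₂,Z₂) = M(X₁ + X₂, Z₁ + Z₂ + Im(X₁*X₂)/2), where X₁*X₂ = Σⱼ (X₁)ⱼ* (X₂)ⱼ and Im(q) = (q − q*)/2. (This is the group law of the 2-step nilpotent group N̄ = exp(n̄) in exponential coordinates.) -/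
import Mathlib


open Quaternion Matrix

noncomputable section

/-- The index type for `(m+2) × (m+2)` matrices in `(1, m, 1)` block form. -/
abbrev Idx (m : ℕ) := Unit ⊕ Fin m ⊕ Unit

/-- The group element `M(X,Z)`:
`[[1 + ‖X‖²/8 + Z/2, -X*/2, ‖X‖²/8 + Z/2], [-X/2, I, -X/2],
  [-‖X‖²/8 - Z/2, X*/2, 1 - ‖X‖²/8 - Z/2]]`, where `‖X‖² = ∑ⱼ |Xⱼ|²`. -/
def matM (m : ℕ) (X : Fin m → Quaternion ℝ) (Z : Quaternion ℝ) :
    Matrix (Idx m) (Idx m) (Quaternion ℝ) :=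
  Matrix.of fun i j =>
    match i, j with
    | Sum.inl _, Sum.inl _ =>
        1 + (((∑ k, Quaternion.normSq (X k)) / 8 : ℝ) : Quaternion ℝ) + Z / 2
    | Sum.inl _, Sum.inr (Sum.inl k) => -star (X k) / 2
    | Sum.inl _, Sum.inr (Sum.inr _) =>
        (((∑ k, Quaternion.normSq (X k)) / 8 : ℝ) : Quaternion ℝ) + Z / 2
    | Sum.inr (Sum.inl k), Sum.inl _ => -X k / 2
    | Sum.inr (Sum.inl k), Sum.inr (Sum.inl l) => if k = l then 1 else 0
    | Sum.inr (Sum.inl k), Sum.inr (Sum.inr _) => -X k / 2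
    | Sum.inr (Sum.inr _), Sum.inl _ =>
        -(((∑ k, Quaternion.normSq (X k)) / 8 : ℝ) : Quaternion ℝ) - Z / 2
    | Sum.inr (Sum.inr _), Sum.inr (Sum.inl k) => star (X k) / 2
    | Sum.inr (Sum.inr _), Sum.inr (Sum.inr _) =>
        1 - (((∑ k, Quaternion.normSq (X k)) / 8 : ℝ) : Quaternion ℝ) - Z / 2

/-- The imaginary part `Im(q) = (q - q*)/2` of a quaternion. -/
def qIm (q : Quaternion ℝ) : Quaternion ℝ := (q - star q) / 2

set_option maxHeartbeats 2000000 in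
/-- the group law of the 2-step nilpotent group `N̄` in exponential
coordinates: `M(X₁,Z₁) · M(X₂,Z₂) = M(X₁+X₂, Z₁+Z₂+Im(X₁*X₂)/2)`. -/
theorem stmt_4 (m : ℕ) (hm : 1 ≤ m) (X₁ X₂ : Fin m → Quaternion ℝ)
    (Z₁ Z₂ : Quaternion ℝ) (hZ₁ : Z₁.re = 0) (hZ₂ : Z₂.re = 0) :
    matM m X₁ Z₁ * matM m X₂ Z₂
      = matM m (X₁ + X₂) (Z₁ + Z₂ + qIm (∑ j, star (X₁ j) * X₂ j) / 2) := by
  have h2 : ((2:ℝ) : Quaternion ℝ) = 2 := by exact_mod_cast rfl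
  have hdiv : ∀ x : Quaternion ℝ, x / 2 = (2⁻¹:ℝ) • x := fun x => by
    rw [div_eq_mul_inv, ← h2, ← Quaternion.coe_inv, Quaternion.mul_coe_eq_smul]
  have hcoe8 : ∀ s : ℝ, ((s/8 : ℝ) : Quaternion ℝ) = (8⁻¹:ℝ) • ((s : ℝ) : Quaternion ℝ) :=
    fun s => by rw [div_eq_inv_mul, ← smul_eq_mul, Quaternion.coe_smul]
  have hcs : ∀ f : Fin m → ℝ, ((∑ k, f k : ℝ) : Quaternion ℝ) = ∑ k, ((f k : ℝ) : Quaternion ℝ) := by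
    intro f
    induction (Finset.univ : Finset (Fin m)) using Finset.cons_induction with
    | empty => simp
    | cons a s ha ih => rw [Finset.sum_cons, Finset.sum_cons, Quaternion.coe_add, ih]
  have hkey : ((∑ k, Quaternion.normSq (X₁ k + X₂ k) : ℝ) : Quaternion ℝ)
      = ((∑ k, Quaternion.normSq (X₁ k) : ℝ) : Quaternion ℝ)
        + ((∑ k, Quaternion.normSq (X₂ k) : ℝ) : Quaternion ℝ)
        + (∑ j, star (X₁ j) * X₂ j) + star (∑ j, star (X₁ j) * X₂ j) := by
    rw [hcs, hcs, hcs, star_sum, ← Finset.sum_add_distrib, ← Finset.sum_add_distrib,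
      ← Finset.sum_add_distrib]
    refine Finset.sum_congr rfl fun k _ => ?_
    simp only [← Quaternion.star_mul_self, star_add, add_mul, mul_add,
      StarMul.star_mul, star_star]
    abel
  refine Matrix.ext fun i j => ?_
  have hprod : ∀ (Y₁ Y₂ : Fin m → Quaternion ℝ),
      ∑ x, ((2⁻¹:ℝ) • Y₁ x) * ((2⁻¹:ℝ) • Y₂ x) = ((2⁻¹*2⁻¹:ℝ)) • ∑ x, Y₁ x * Y₂ x := by
    intro Y₁ Y₂
    rw [Finset.smul_sum]
    exact Finset.sum_congr rfl fun x _ => smul_mul_smul_comm _ _ _ _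
  rcases i with _ | i | _ <;> rcases j with _ | j | _ <;>
    simp only [Matrix.mul_apply, matM, Matrix.of_apply, Fintype.sum_sum_type,
      Fintype.sum_unique, qIm, hdiv, hcoe8, Pi.add_apply, hkey, neg_div, star_add] <;>
    simp only [smul_ite, mul_ite, ite_mul, mul_one, mul_zero, one_mul, zero_mul,
      smul_zero, neg_zero, Finset.sum_neg_distrib, Finset.sum_ite_eq, Finset.sum_ite_eq', Finset.mem_univ, if_true,
      smul_neg, neg_mul_neg, neg_mul, mul_neg, hprod, neg_neg] <;>
    [skip; skip; skip; skip; skip; skip; skip; skip; skip]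
  all_goals ((simp only [mul_add, add_mul, sub_mul, mul_sub, mul_one, one_mul, mul_smul_comm, smul_mul_assoc, smul_mul_smul_comm, smul_smul, smul_add, smul_sub, smul_neg, neg_mul, mul_neg, neg_neg]; module))
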